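/- Let A be the boundary of a compact convex set in ℝ², let p be a point on A lying in the relative interior of a segment [s,t] ⊆ A, and suppose the open disk D of radius ε centered at p is disjoint from a nonempty compact convex set K lying entirely in the closed half-plane determined by the line through s and t containing A's convex body. If a line m separates D from K, then at least one of s or t has distance greater than ε from K. -/

import Mathlib

open Metric Set

private lemma key_aux {E : Type*} [NormedAddCommGroup E] [InnerProductSpace ℝ E]
    (K : Set E) (s : E) (hKne : K.Nonempty) (hKc : IsCompact K)
    (f : E →L[ℝ] ℝ) (hf : ‖f‖ = 1) (c ε : ℝ)
    (hsep2 : ∀ y ∈ K, c < f y) (hc : f s + ε ≤ c) :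
    ε < infDist s K := by
  obtain ⟨y0, hy0, hdy0⟩ := hKc.exists_infDist_eq_dist hKne s
  rw [hdy0]
  have h1 : f y0 - f s ≤ ‖y0 - s‖ := by
    calc f y0 - f s = f (y0 - s) := by rw [map_sub]
    _ ≤ |f (y0 - s)| := le_abs_self _
    _ = ‖f (y0 - s)‖ := rfl
    _ ≤ ‖f‖ * ‖y0 - s‖ := f.le_opNorm _
    _ = ‖y0 - s‖ := by rw [hf, one_mul]
  have h2 : c < f y0 := hsep2 y0 hy0
  have h3 : ε < ‖y0 - s‖ := by linarith
  calc ε < ‖y0 - s‖ := h3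
  _ = dist s y0 := by rw [dist_eq_norm, norm_sub_rev]

/-- Key case in the discrete-Hausdorff lemma: `p` lies on the boundary of a compact convex
body `K0`, in the relative interior of a segment `[s,t]` contained in that boundary; the
open disk `D` of radius `ε` about `p` is disjoint from a nonempty compact convex set `K`
lying in the closed half-plane (through `s` and `t`) containing `K0`.  If a line separates
`D` from `K`, then `s` or `t` has distance greater than `ε` from `K`. -/
theorem stmt4 (K0 K : Set (EuclideanSpace ℝ (Fin 2)))
    (hK0c : IsCompact K0) (hK0 : Convex ℝ K0)
    (s t p : EuclideanSpace ℝ (Fin 2))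
    (hp : p ∈ openSegment ℝ s t) (hseg : segment ℝ s t ⊆ frontier K0)
    (ε : ℝ) (hε : 0 < ε)
    (hKne : K.Nonempty) (hKc : IsCompact K) (hK : Convex ℝ K)
    (hdisj : ball p ε ∩ K = ∅)
    (g : EuclideanSpace ℝ (Fin 2) →L[ℝ] ℝ) (hg : g ≠ 0) (hgst : g s = g t)
    (hhalfK0 : K0 ⊆ {x | g x ≤ g s}) (hhalfK : K ⊆ {x | g x ≤ g s})
    (f : EuclideanSpace ℝ (Fin 2) →L[ℝ] ℝ) (hf : ‖f‖ = 1) (c : ℝ)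
    (hsep1 : ∀ x ∈ ball p ε, f x < c) (hsep2 : ∀ y ∈ K, c < f y) :
    ε < infDist s K ∨ ε < infDist t K := by
  -- Step 1: f ≤ c on the closed ball.
  have hcb : closedBall p ε ⊆ {x | f x ≤ c} := by
    rw [← closure_ball p hε.ne']
    exact closure_minimal (fun x hx => (hsep1 x hx).le)
      (isClosed_le f.continuous continuous_const)
  -- Step 2: f p + ε ≤ c.
  have hpc : f p + ε ≤ c := by
    have hbound : ‖f‖ ≤ (c - f p) / ε := by
      apply ContinuousLinearMap.opNorm_le_bound
      · have : f p ≤ c := hcb (mem_closedBall_self hε.le)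
        exact div_nonneg (by linarith) hε.le
      · intro x
        rcases eq_or_ne x 0 with rfl | hx
        · simp
        · have hxn : (0:ℝ) < ‖x‖ := norm_pos_iff.mpr hx
          have key : ∀ (v : EuclideanSpace ℝ (Fin 2)), ‖v‖ = ‖x‖ → f v ≤ (c - f p) / ε * ‖x‖ := by
            intro v hv
            have hmem : p + (ε / ‖x‖) • v ∈ closedBall p ε := by
              rw [mem_closedBall, dist_eq_norm]
              have : p + (ε / ‖x‖) • v - p = (ε / ‖x‖) • v := by abel
              rw [this, norm_smul, hv]
              rw [Real.norm_eq_abs, abs_of_pos (by positivity)]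
              field_simp
              exact le_rfl
            have := hcb hmem
            simp only [mem_setOf_eq, map_add, map_smul, smul_eq_mul] at this
            have hfv : ε / ‖x‖ * f v ≤ c - f p := by linarith
            calc f v = (ε / ‖x‖ * f v) * (‖x‖ / ε) := by field_simp
            _ ≤ (c - f p) * (‖x‖ / ε) := by
                apply mul_le_mul_of_nonneg_right hfv (by positivity)
            _ = (c - f p) / ε * ‖x‖ := by ring
          have h1 : f x ≤ (c - f p) / ε * ‖x‖ := key x rfl
          have h2 : f (-x) ≤ (c - f p) / ε * ‖x‖ := key (-x) (by simp)
          rw [map_neg] at h2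
          rw [Real.norm_eq_abs, abs_le]
          constructor <;> linarith
    rw [hf] at hbound
    have : ε ≤ c - f p := by
      rw [le_div_iff₀ hε] at hbound
      linarith
    linarith
  -- Step 3: min (f s) (f t) ≤ f p.
  obtain ⟨a, b, ha, hb, hab, hpab⟩ := hp
  have hfp : f p = a * f s + b * f t := by
    rw [← hpab]; simp [map_add, map_smul]
  rcases le_total (f s) (f t) with hst | hst
  · left
    refine key_aux K s hKne hKc f hf c ε hsep2 ?_
    have hd : f p - f s = b * (f t - f s) := by
      have ha' : a = 1 - b := by linarith
      rw [hfp, ha']; ring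
    nlinarith [mul_nonneg hb.le (sub_nonneg.mpr hst)]
  · right
    refine key_aux K t hKne hKc f hf c ε hsep2 ?_
    have hd : f p - f t = a * (f s - f t) := by
      have hb' : b = 1 - a := by linarith
      rw [hfp, hb']; ring
    nlinarith [mul_nonneg ha.le (sub_nonneg.mpr hst)]
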